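/- Let k be a field, H a group, and V a module over the group algebra k[H]. Suppose V has a k[H]-submodule V1 such that: V1 and V2 := V/V1 are simple k[H]-modules; V1 and V2 are not isomorphic; every k[H]-module endomorphism of V1 is multiplication by a scalar in k, and likewise every k[H]-module endomorphism of V2 is multiplication by a scalar in k; and the extension does not split, i.e. V1 has no k[H]-module complement in V (equivalently V is not semisimple). Then every k[H]-module endomorphism of V is multiplication by a scalar in k, i.e. End_{k[H]}(V) = k. -/
import Mathlib


/-- Let `k` be a field, `H` a group and `V` a `k[H]`-module with a
submodule `V₁` such that `V₁` and `V₂ := V/V₁` are simple, non-isomorphic, both with only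
scalar endomorphisms, and such that `V₁` has no `k[H]`-module complement in `V`.
Then every `k[H]`-endomorphism of `V` is multiplication by a scalar in `k`. -/
theorem end_eq_scalars_of_nonsplit_extension
    (k : Type) [Field k] (H : Type) [Group H]
    (V : Type) [AddCommGroup V] [Module (MonoidAlgebra k H) V]
    [Module k V] [IsScalarTower k (MonoidAlgebra k H) V]
    (V₁ : Submodule (MonoidAlgebra k H) V)
    (hsimple₁ : IsSimpleModule (MonoidAlgebra k H) V₁)
    (hsimple₂ : IsSimpleModule (MonoidAlgebra k H) (V ⧸ V₁))
    (hnoniso : IsEmpty (V₁ ≃ₗ[MonoidAlgebra k H] V ⧸ V₁))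
    (hend₁ : ∀ f : V₁ →ₗ[MonoidAlgebra k H] V₁, ∃ c : k, ∀ x : V₁, f x = c • x)
    (hend₂ : ∀ f : (V ⧸ V₁) →ₗ[MonoidAlgebra k H] (V ⧸ V₁), ∃ c : k, ∀ x, f x = c • x)
    (hnonsplit : ¬ ∃ U : Submodule (MonoidAlgebra k H) V, IsCompl V₁ U) :
    ∀ f : V →ₗ[MonoidAlgebra k H] V, ∃ c : k, ∀ x : V, f x = c • x := by
  set A := MonoidAlgebra k H with hA
  -- k-scalars commute with A-action
  have scomm : ∀ (c : k) (a : A) (x : V), c • a • x = a • c • x := by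
    intro c a x
    rw [← smul_assoc, Algebra.smul_def, Algebra.commutes, mul_smul, algebraMap_smul]
  -- scalar multiplication as an A-linear endomorphism
  let sc : k → V →ₗ[A] V := fun c =>
    { toFun := fun x => c • x
      map_add' := fun x y => smul_add c x y
      map_smul' := fun a x => scomm c a x }
  have smem : ∀ (c : k) (x : V), x ∈ V₁ → c • x ∈ V₁ := by
    intro c x hx
    rw [← algebraMap_smul A c x]
    exact V₁.smul_mem _ hx
  intro f
  -- Step 1: f maps V₁ into V₁
  have hf1 : ∀ x ∈ V₁, f x ∈ V₁ := by
    by_contra hcon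
    push_neg at hcon
    obtain ⟨x, hx, hfx⟩ := hcon
    set φ : V₁ →ₗ[A] V ⧸ V₁ := (V₁.mkQ.comp f).comp V₁.subtype with hφ
    have hφne : φ ≠ 0 := by
      intro h0
      apply hfx
      have := congrArg (fun g => g ⟨x, hx⟩) h0
      simpa [hφ, Submodule.Quotient.mk_eq_zero] using this
    have hinj := φ.injective_or_eq_zero.resolve_right hφne
    have hsurj := φ.surjective_or_eq_zero.resolve_right hφne
    exact hnoniso.elim (LinearEquiv.ofBijective φ ⟨hinj, hsurj⟩)
  -- Step 2: scalar on V₁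
  obtain ⟨c, hc⟩ := hend₁ (f.restrict hf1)
  have hcV : ∀ x ∈ V₁, f x = c • x := by
    intro x hx
    have := congrArg (Subtype.val) (hc ⟨x, hx⟩)
    simpa [LinearMap.restrict_apply] using this
  -- Step 3: induced map on quotient and its scalar
  have hle : V₁ ≤ V₁.comap f := fun x hx => hf1 x hx
  obtain ⟨d, hd⟩ := hend₂ (V₁.mapQ V₁ f hle)
  have hdV : ∀ x : V, V₁.mkQ (f x) = d • V₁.mkQ x := by
    intro x
    have := hd (V₁.mkQ x)
    simpa [Submodule.mapQ_apply] using this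
  -- Step 4: d = c, else we construct a complement
  have hdc : d = c := by
    by_contra hne
    set h : V →ₗ[A] V := f - sc d with hh
    have hhV₁ : ∀ x : V, h x ∈ V₁ := by
      intro x
      rw [← Submodule.Quotient.mk_eq_zero, ← Submodule.mkQ_apply]
      have : V₁.mkQ (h x) = V₁.mkQ (f x) - d • V₁.mkQ x := by
        simp [hh, sc, Submodule.Quotient.mk_smul]
      rw [this, hdV x, sub_self]
    have hhon : ∀ x ∈ V₁, h x = (c - d) • x := by
      intro x hx
      have : h x = f x - d • x := by simp [hh, sc]
      rw [this, hcV x hx, sub_smul]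
    have hcd0 : c - d ≠ 0 := sub_ne_zero.mpr (fun e => hne e.symm)
    have hksmul : ∀ (e : k) (y : V), h (e • y) = e • h y := by
      intro e y
      rw [← algebraMap_smul A e y, ← algebraMap_smul A e (h y), map_smul]
    refine hnonsplit ⟨LinearMap.ker h, ?_, ?_⟩
    · -- disjoint
      rw [disjoint_iff]
      ext x
      simp only [Submodule.mem_inf, Submodule.mem_bot, LinearMap.mem_ker]
      constructor
      · rintro ⟨hx1, hx2⟩
        have := hhon x hx1
        rw [hx2] at this
        have := this.symm
        rcases smul_eq_zero.mp this with h' | h'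
        · exact absurd h' hcd0
        · exact h'
      · rintro rfl; exact ⟨V₁.zero_mem, map_zero h⟩
    · -- codisjoint
      rw [codisjoint_iff, eq_top_iff]
      intro x _
      have hx1 : (c - d)⁻¹ • h x ∈ V₁ := smem _ _ (hhV₁ x)
      have hx2 : x - (c - d)⁻¹ • h x ∈ LinearMap.ker h := by
        rw [LinearMap.mem_ker, map_sub, hksmul, hhon (h x) (hhV₁ x),
          smul_smul, inv_mul_cancel₀ hcd0, one_smul, sub_self]
      have : x = ((c - d)⁻¹ • h x) + (x - (c - d)⁻¹ • h x) := by abel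
      rw [this]
      exact Submodule.add_mem_sup hx1 hx2
  -- Step 5: with d = c, g := f - c • id maps V into V₁ and kills V₁
  subst hdc
  set g : V →ₗ[A] V := f - sc d with hg
  have hgV₁ : ∀ x : V, g x ∈ V₁ := by
    intro x
    rw [← Submodule.Quotient.mk_eq_zero, ← Submodule.mkQ_apply]
    have : V₁.mkQ (g x) = V₁.mkQ (f x) - d • V₁.mkQ x := by
      simp [hg, sc, Submodule.Quotient.mk_smul]
    rw [this, hdV x, sub_self]
  have hgker : ∀ x ∈ V₁, g x = 0 := by
    intro x hx
    have : g x = f x - d • x := by simp [hg, sc]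
    rw [this, hcV x hx, sub_self]
  set g' : V →ₗ[A] V₁ := g.codRestrict V₁ hgV₁ with hg'
  have hker : V₁ ≤ LinearMap.ker g' := by
    intro x hx
    rw [LinearMap.mem_ker]
    ext
    simpa [hg', LinearMap.codRestrict_apply] using hgker x hx
  set gbar : (V ⧸ V₁) →ₗ[A] V₁ := V₁.liftQ g' hker with hgbar
  have hg0 : gbar = 0 := by
    by_contra h0
    have hinj := gbar.injective_or_eq_zero.resolve_right h0
    have hsurj := gbar.surjective_or_eq_zero.resolve_right h0
    exact hnoniso.elim (LinearEquiv.ofBijective gbar ⟨hinj, hsurj⟩).symm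
  refine ⟨d, fun x => ?_⟩
  have : g' x = gbar (V₁.mkQ x) := by simp [hgbar, Submodule.liftQ_apply]
  rw [hg0] at this
  have hzero : g x = 0 := by
    have := congrArg Subtype.val this
    simpa [hg', LinearMap.codRestrict_apply] using this
  have : f x - d • x = 0 := by simpa [hg, sc] using hzero
  exact sub_eq_zero.mp this
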